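/- Let N ≥ 1, m₁ ≥ 1, m₂ ≥ 1, let u : Fin m₁ → (ZMod N → ZMod 4), v : Fin m₂ → (ZMod N → ZMod 4), κ : Fin m₁ → ZMod 4, κ' : Fin m₂ → ZMod 4, and define s(t) = (1+i) · ∑_{k=0}^{m₁−1} 2^k · i^{u_k(t)} · i^{κ_k} and s'(t) = (1+i) · ∑_{l=0}^{m₂−1} 2^l · i^{v_l(t)} · i^{κ'_l}. Fix τ ∈ ZMod N and suppose |θ_{u_k,v_l}(τ)| ≤ 1 + √(N+1) for all k, l. Then |θ_{s,s'}(τ)| ≤ 2·(2^{m₁} − 1)·(2^{m₂} − 1)·(1 + √(N+1)). -/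

import Mathlib

/-- For `a ∈ ZMod 4`, the complex number `i^a := Complex.I ^ a.val`. -/
noncomputable def zi (a : ZMod 4) : ℂ := Complex.I ^ a.val

/-- Periodic correlation of complex sequences of period `N` at shift `τ`:
`θ_{s,s'}(τ) = ∑_t s(t+τ) · conj (s'(t))`. -/
noncomputable def pcorr {N : ℕ} [NeZero N] (s s' : ZMod N → ℂ) (τ : ZMod N) : ℂ :=
  ∑ t : ZMod N, s (t + τ) * (starRingEnd ℂ) (s' t)

/-- Periodic correlation of quaternary sequences of period `N` at shift `τ`:
`θ_{u,v}(τ) = ∑_t i^{u(t+τ)} · conj (i^{v(t)})`. -/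
noncomputable def qcorr {N : ℕ} [NeZero N] (u v : ZMod N → ZMod 4) (τ : ZMod N) : ℂ :=
  ∑ t : ZMod N, zi (u (t + τ)) * (starRingEnd ℂ) (zi (v t))

lemma zi_abs (a : ZMod 4) : ‖(zi a)‖ = 1 := by
  simp [zi, map_pow]

lemma fin_geom_sum (m : ℕ) : ∑ k : Fin m, (2 : ℝ) ^ (k : ℕ) = 2 ^ m - 1 := by
  rw [Fin.sum_univ_eq_sum_range]
  have := geom_sum_eq (x := (2 : ℝ)) (by norm_num) m
  rw [this]; ring

/-- Cross-family correlation bound enabling variable-rate signalling: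
for QAM sequences over constellations of sizes `4^{m₁}` and `4^{m₂}` whose component
correlations at shift `τ` are bounded by `1 + √(N+1)`, the correlation is bounded by
`2(2^{m₁} - 1)(2^{m₂} - 1)(1 + √(N+1))`. -/
theorem qam_variable_rate_correlation_bound (N m₁ m₂ : ℕ) [NeZero N]
    (hm₁ : 1 ≤ m₁) (hm₂ : 1 ≤ m₂)
    (u : Fin m₁ → ZMod N → ZMod 4) (v : Fin m₂ → ZMod N → ZMod 4)
    (κ : Fin m₁ → ZMod 4) (κ' : Fin m₂ → ZMod 4) (τ : ZMod N)
    (hcorr : ∀ (k : Fin m₁) (l : Fin m₂),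
      ‖(qcorr (u k) (v l) τ)‖ ≤ 1 + Real.sqrt (N + 1)) :
    ‖(pcorr
      (fun t => (1 + Complex.I) * ∑ k : Fin m₁, (2 : ℂ) ^ (k : ℕ) * zi (u k t) * zi (κ k))
      (fun t => (1 + Complex.I) * ∑ l : Fin m₂, (2 : ℂ) ^ (l : ℕ) * zi (v l t) * zi (κ' l))
      τ)‖
    ≤ 2 * (2 ^ m₁ - 1) * (2 ^ m₂ - 1) * (1 + Real.sqrt (N + 1)) := by
  set B := 1 + Real.sqrt (N + 1) with hBdef
  have hB0 : 0 ≤ B := by positivity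
  have swap : ∀ (f : Fin m₁ → Fin m₂ → ZMod N → ℂ),
      (∑ k : Fin m₁, ∑ l : Fin m₂, ∑ t : ZMod N, f k l t)
        = ∑ t : ZMod N, ∑ k : Fin m₁, ∑ l : Fin m₂, f k l t := by
    intro f
    calc (∑ k : Fin m₁, ∑ l : Fin m₂, ∑ t : ZMod N, f k l t)
        = ∑ k : Fin m₁, ∑ t : ZMod N, ∑ l : Fin m₂, f k l t :=
          Finset.sum_congr rfl fun k _ => Finset.sum_comm
      _ = ∑ t : ZMod N, ∑ k : Fin m₁, ∑ l : Fin m₂, f k l t := Finset.sum_comm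
  have key : pcorr
      (fun t => (1 + Complex.I) * ∑ k : Fin m₁, (2 : ℂ) ^ (k : ℕ) * zi (u k t) * zi (κ k))
      (fun t => (1 + Complex.I) * ∑ l : Fin m₂, (2 : ℂ) ^ (l : ℕ) * zi (v l t) * zi (κ' l))
      τ = ∑ k : Fin m₁, ∑ l : Fin m₂,
        (2 * ((2 : ℂ) ^ (k : ℕ) * (2 : ℂ) ^ (l : ℕ) * zi (κ k) *
          (starRingEnd ℂ) (zi (κ' l)))) * qcorr (u k) (v l) τ := by
    unfold pcorr qcorr
    simp only [Finset.mul_sum]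
    rw [swap]
    refine Finset.sum_congr rfl fun t _ => ?_
    simp only [map_mul, map_sum, map_add, map_one, Complex.conj_I, map_pow, map_ofNat,
      Finset.mul_sum, Finset.sum_mul]
    rw [Finset.sum_comm]
    refine Finset.sum_congr rfl fun k _ => Finset.sum_congr rfl fun l _ => ?_
    ring_nf
    rw [Complex.I_sq]
    ring
  rw [key]
  have tri : ‖(∑ k : Fin m₁, ∑ l : Fin m₂,
        (2 * ((2 : ℂ) ^ (k : ℕ) * (2 : ℂ) ^ (l : ℕ) * zi (κ k) *
          (starRingEnd ℂ) (zi (κ' l)))) * qcorr (u k) (v l) τ)‖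
      ≤ ∑ k : Fin m₁, ∑ l : Fin m₂, ‖((2 * ((2 : ℂ) ^ (k : ℕ) * (2 : ℂ) ^ (l : ℕ) *
          zi (κ k) * (starRingEnd ℂ) (zi (κ' l)))) * qcorr (u k) (v l) τ)‖ := by
    exact (norm_sum_le _ _).trans (Finset.sum_le_sum fun k _ => norm_sum_le _ _)
  refine tri.trans ?_
  have step : ∀ (k : Fin m₁) (l : Fin m₂),
      ‖((2 * ((2 : ℂ) ^ (k : ℕ) * (2 : ℂ) ^ (l : ℕ) *
          zi (κ k) * (starRingEnd ℂ) (zi (κ' l)))) * qcorr (u k) (v l) τ)‖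
      ≤ 2 * (2:ℝ) ^ (k:ℕ) * (2:ℝ) ^ (l:ℕ) * B := by
    intro k l
    rw [norm_mul, norm_mul, norm_mul, norm_mul, norm_mul, zi_abs, Complex.norm_conj, zi_abs]
    simp only [norm_pow, mul_one]
    have h1 : ‖(2 : ℂ)‖ = 2 := by norm_num
    rw [h1]
    have hq := hcorr k l
    have hnn : (0:ℝ) ≤ 2 * 2^(k:ℕ) * 2^(l:ℕ) := by positivity
    have h2 := mul_le_mul_of_nonneg_left hq hnn
    ring_nf at h2 ⊢
    linarith
  calc ∑ k : Fin m₁, ∑ l : Fin m₂, ‖((2 * ((2 : ℂ) ^ (k : ℕ) * (2 : ℂ) ^ (l : ℕ) *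
          zi (κ k) * (starRingEnd ℂ) (zi (κ' l)))) * qcorr (u k) (v l) τ)‖
      ≤ ∑ k : Fin m₁, ∑ l : Fin m₂, 2 * (2:ℝ) ^ (k:ℕ) * (2:ℝ) ^ (l:ℕ) * B :=
        Finset.sum_le_sum fun k _ => Finset.sum_le_sum fun l _ => step k l
    _ = ∑ k : Fin m₁, 2 * (2:ℝ) ^ (k:ℕ) * (2 ^ m₂ - 1) * B := by
        refine Finset.sum_congr rfl fun k _ => ?_
        calc ∑ l : Fin m₂, 2 * (2:ℝ) ^ (k:ℕ) * (2:ℝ) ^ (l:ℕ) * B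
            = ∑ l : Fin m₂, (2 * (2:ℝ) ^ (k:ℕ) * B) * (2:ℝ) ^ (l:ℕ) :=
              Finset.sum_congr rfl fun l _ => by ring
          _ = (2 * (2:ℝ) ^ (k:ℕ) * B) * ∑ l : Fin m₂, (2:ℝ) ^ (l:ℕ) :=
              (Finset.mul_sum _ _ _).symm
          _ = 2 * (2:ℝ) ^ (k:ℕ) * (2 ^ m₂ - 1) * B := by rw [fin_geom_sum]; ring
    _ = 2 * (2 ^ m₁ - 1) * (2 ^ m₂ - 1) * B := by
        calc ∑ k : Fin m₁, 2 * (2:ℝ) ^ (k:ℕ) * (2 ^ m₂ - 1) * B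
            = ∑ k : Fin m₁, (2 * (2 ^ m₂ - 1) * B) * (2:ℝ) ^ (k:ℕ) :=
              Finset.sum_congr rfl fun k _ => by ring
          _ = (2 * (2 ^ m₂ - 1) * B) * ∑ k : Fin m₁, (2:ℝ) ^ (k:ℕ) :=
              (Finset.mul_sum _ _ _).symm
          _ = 2 * (2 ^ m₁ - 1) * (2 ^ m₂ - 1) * B := by rw [fin_geom_sum]; ring
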